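/- For closed subspaces E, F, G of a Hilbert space, the distance d(E,F) := sup over nonzero x in E of ‖x − P_F x‖/‖x‖ (where P_F is the orthogonal projection onto F) satisfies the triangle inequality d(E,G) ≤ d(E,F) + d(F,G). -/

import Mathlib

/-- The distance `d(E,F) = sup_{x ∈ E, x ≠ 0} ‖x - P_F x‖ / ‖x‖` between two
(closed, i.e. complete) subspaces of a Hilbert space. -/
noncomputable def subDist {H : Type*} [NormedAddCommGroup H] [InnerProductSpace ℝ H]
    (E F : Submodule ℝ H) [CompleteSpace F] : ℝ :=
  sSup ((fun x => ‖x - (F.subtypeL.comp (F.orthogonalProjection)) x‖ / ‖x‖) ''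
    {x : H | x ∈ E ∧ x ≠ 0})

section aux

variable {H : Type*} [NormedAddCommGroup H] [InnerProductSpace ℝ H]

/-- The orthogonal projection minimizes distance. -/
lemma proj_min (F : Submodule ℝ H) [CompleteSpace F] (x : H) (z : H) (hz : z ∈ F) :
    ‖x - (F.orthogonalProjection x : H)‖ ≤ ‖x - z‖ := by
  change ‖x - F.starProjection x‖ ≤ _
  rw [Submodule.starProjection_minimal]
  exact ciInf_le ⟨0, by rintro _ ⟨y, rfl⟩; exact norm_nonneg _⟩ (⟨z, hz⟩ : F)

lemma proj_norm_le (F : Submodule ℝ H) [CompleteSpace F] (x : H) :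
    ‖(F.orthogonalProjection x : H)‖ ≤ ‖x‖ := by
  have := (F.orthogonalProjection).le_opNorm x
  calc ‖(F.orthogonalProjection x : H)‖ = ‖F.orthogonalProjection x‖ := rfl
    _ ≤ ‖F.orthogonalProjection‖ * ‖x‖ := this
    _ ≤ 1 * ‖x‖ := by
        exact mul_le_mul_of_nonneg_right (Submodule.orthogonalProjectionOnto_norm_le F) (norm_nonneg _)
    _ = ‖x‖ := one_mul _

lemma subDist_bddAbove (E F : Submodule ℝ H) [CompleteSpace F] :
    BddAbove ((fun x => ‖x - (F.subtypeL.comp (F.orthogonalProjection)) x‖ / ‖x‖) ''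
      {x : H | x ∈ E ∧ x ≠ 0}) := by
  refine ⟨1, ?_⟩
  rintro _ ⟨x, ⟨hx, hx0⟩, rfl⟩
  have hx' : (0:ℝ) < ‖x‖ := norm_pos_iff.mpr hx0
  rw [div_le_one hx']
  simpa using proj_min F x 0 F.zero_mem

lemma subDist_nonneg (E F : Submodule ℝ H) [CompleteSpace F] :
    0 ≤ subDist E F := by
  rcases Set.eq_empty_or_nonempty {x : H | x ∈ E ∧ x ≠ 0} with h | ⟨x, hx, hx0⟩
  · simp [subDist, h, Real.sSup_empty]
  · refine le_csSup_of_le (subDist_bddAbove E F) ⟨x, ⟨hx, hx0⟩, rfl⟩ ?_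
    positivity

/-- Key estimate: for any `y ∈ F`, `‖y - P_G y‖ ≤ d(F,G) * ‖y‖`. -/
lemma dist_le_subDist_mul (F G : Submodule ℝ H) [CompleteSpace G] (y : H) (hy : y ∈ F) :
    ‖y - (G.orthogonalProjection y : H)‖ ≤ subDist F G * ‖y‖ := by
  rcases eq_or_ne y 0 with rfl | hy0
  · simp
  · have hy' : (0:ℝ) < ‖y‖ := norm_pos_iff.mpr hy0
    have : ‖y - (G.orthogonalProjection y : H)‖ / ‖y‖ ≤ subDist F G :=
      le_csSup (subDist_bddAbove F G) ⟨y, ⟨hy, hy0⟩, rfl⟩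
    calc ‖y - (G.orthogonalProjection y : H)‖
        = ‖y - (G.orthogonalProjection y : H)‖ / ‖y‖ * ‖y‖ := by field_simp
      _ ≤ subDist F G * ‖y‖ := mul_le_mul_of_nonneg_right this hy'.le

end aux

/-- The triangle inequality `d(E,G) ≤ d(E,F) + d(F,G)` for the distance between
closed subspaces of a Hilbert space. -/
theorem stmt2 {H : Type*} [NormedAddCommGroup H] [InnerProductSpace ℝ H] [CompleteSpace H]
    (E F G : Submodule ℝ H) [CompleteSpace E] [CompleteSpace F] [CompleteSpace G] :
    subDist E G ≤ subDist E F + subDist F G := by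
  have hadd : 0 ≤ subDist E F + subDist F G :=
    add_nonneg (subDist_nonneg E F) (subDist_nonneg F G)
  rw [subDist]
  apply Real.sSup_le _ hadd
  rintro _ ⟨x, ⟨hx, hx0⟩, rfl⟩
  have hx' : (0:ℝ) < ‖x‖ := norm_pos_iff.mpr hx0
  rw [div_le_iff₀ hx']
  set y : H := (F.orthogonalProjection x : H) with hy
  have hyF : y ∈ F := Submodule.coe_mem _
  have h1 : ‖x - y‖ ≤ subDist E F * ‖x‖ := dist_le_subDist_mul E F x hx
  have h2 : ‖y - (G.orthogonalProjection y : H)‖ ≤ subDist F G * ‖y‖ :=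
    dist_le_subDist_mul F G y hyF
  calc ‖x - (G.subtypeL.comp (G.orthogonalProjection)) x‖
      = ‖x - (G.orthogonalProjection x : H)‖ := rfl
    _ ≤ ‖x - (G.orthogonalProjection y : H)‖ := proj_min G x _ (Submodule.coe_mem _)
    _ ≤ ‖x - y‖ + ‖y - (G.orthogonalProjection y : H)‖ := by
        simpa using norm_sub_le_norm_sub_add_norm_sub x y _
    _ ≤ subDist E F * ‖x‖ + subDist F G * ‖y‖ := add_le_add h1 h2
    _ ≤ subDist E F * ‖x‖ + subDist F G * ‖x‖ := by
        gcongr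
        · exact subDist_nonneg F G
        · exact proj_norm_le F x
    _ = (subDist E F + subDist F G) * ‖x‖ := (add_mul _ _ _).symm
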